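/- Let d ∈ ℕ, let Q ⊆ [0,1]^d be a dyadic cube of side length 2^{−k}, let E ⊆ [0,1]^d with E ∩ 7Q ≠ ∅, and let B be a closed ball of radius r = 7√d·2^{−k} with 7Q ⊆ B. Then sparse(E, 7Q) ≤ √d·(d+1)·sparse(E, B). -/

import Mathlib

open Metric MeasureTheory
open scoped ENNReal

noncomputable section

/-- The closed unit cube `[0,1]^d` in Euclidean space. -/
def unitCube (d : ℕ) : Set (EuclideanSpace ℝ (Fin d)) := {x | ∀ i, 0 ≤ x i ∧ x i ≤ 1}

/-- The dyadic cube `Q = Π_i [a_i·2^{-k}, (a_i+1)·2^{-k})`. -/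
def dyCube (d k : ℕ) (a : Fin d → ℕ) : Set (EuclideanSpace ℝ (Fin d)) :=
  {x | ∀ i, (a i : ℝ) * 2 ^ (-(k : ℤ)) ≤ x i ∧ x i < ((a i : ℝ) + 1) * 2 ^ (-(k : ℤ))}

/-- The tripled dyadic cube `3Q = Π_i [(a_i-1)·2^{-k}, (a_i+2)·2^{-k})`. -/
def dyCube3 (d k : ℕ) (a : Fin d → ℕ) : Set (EuclideanSpace ℝ (Fin d)) :=
  {x | ∀ i, ((a i : ℝ) - 1) * 2 ^ (-(k : ℤ)) ≤ x i ∧ x i < ((a i : ℝ) + 2) * 2 ^ (-(k : ℤ))}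

/-- The septupled dyadic cube `7Q = Π_i [(a_i-3)·2^{-k}, (a_i+4)·2^{-k})`. -/
def dyCube7 (d k : ℕ) (a : Fin d → ℕ) : Set (EuclideanSpace ℝ (Fin d)) :=
  {x | ∀ i, ((a i : ℝ) - 3) * 2 ^ (-(k : ℤ)) ≤ x i ∧ x i < ((a i : ℝ) + 4) * 2 ^ (-(k : ℤ))}

/-- `sparse(E, 7Q) = sup { dist(x, 7Q ∩ E) : x ∈ 7Q } / side(7Q)` with `side(7Q) = 7·2^{-k}`. -/
def sparse7 {d : ℕ} (E : Set (EuclideanSpace ℝ (Fin d))) (k : ℕ) (a : Fin d → ℕ) : ℝ :=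
  (⨆ x : (dyCube7 d k a),
    Metric.infDist (x : EuclideanSpace ℝ (Fin d)) (dyCube7 d k a ∩ E)) / (7 * 2 ^ (-(k : ℤ)))

/-- The sparsity of a set `E` in the closed ball `B(c,r)`:
`sparse(E,B) = sup { dist(x, E ∩ B) : x ∈ B } / r`. -/
def sparseIn {X : Type*} [MetricSpace X] (E : Set X) (c : X) (r : ℝ) : ℝ :=
  (⨆ x : (Metric.closedBall c r), Metric.infDist (x : X) (E ∩ Metric.closedBall c r)) / r

lemma coord_dist_le' {d : ℕ} (x y : EuclideanSpace ℝ (Fin d)) (i : Fin d) :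
    dist (x i) (y i) ≤ dist x y := by
  rw [EuclideanSpace.dist_eq]
  nth_rewrite 1 [← Real.sqrt_sq (dist_nonneg (x := x i) (y := y i))]
  exact Real.sqrt_le_sqrt (Finset.single_le_sum (f := fun j => dist (x j) (y j) ^ 2) (fun j _ => sq_nonneg _) (Finset.mem_univ i))

lemma dist_le_sqrt_mul' {d : ℕ} (x y : EuclideanSpace ℝ (Fin d)) (M : ℝ) (hM : 0 ≤ M)
    (h : ∀ i, dist (x i) (y i) ≤ M) : dist x y ≤ Real.sqrt d * M := by
  rw [EuclideanSpace.dist_eq]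
  have h1 : ∑ i, dist (x i) (y i) ^ 2 ≤ (d : ℝ) * M ^ 2 := by
    calc ∑ i, dist (x i) (y i) ^ 2 ≤ ∑ _i : Fin d, M ^ 2 :=
          Finset.sum_le_sum fun i _ => pow_le_pow_left₀ dist_nonneg (h i) 2
      _ = (d : ℝ) * M ^ 2 := by
          simp [Finset.sum_const, Finset.card_univ]
  calc Real.sqrt (∑ i, dist (x i) (y i) ^ 2) ≤ Real.sqrt ((d : ℝ) * M ^ 2) :=
        Real.sqrt_le_sqrt h1
    _ = Real.sqrt d * M := by
        rw [Real.sqrt_mul (Nat.cast_nonneg d), Real.sqrt_sq hM]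

lemma infDist_cube_aux {d : ℕ} (hd1 : 1 ≤ d) (L R : Fin d → ℝ) (s S : ℝ) (hs : 0 < s)
    (hRL : ∀ i, R i - L i = s) (hS0 : 0 ≤ S)
    (E B : Set (EuclideanSpace ℝ (Fin d)))
    (hE : ∀ y ∈ E, ∀ i, 0 ≤ y i ∧ y i ≤ 1)
    (hQB : {w : EuclideanSpace ℝ (Fin d) | ∀ i, L i ≤ w i ∧ w i < R i} ⊆ B)
    (hEB : (E ∩ B).Nonempty)
    (hSle : ∀ z ∈ B, Metric.infDist z (E ∩ B) ≤ S)
    (hnee : ∃ e, e ∈ E ∧ ∀ i, L i ≤ e i ∧ e i < R i)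
    (x : EuclideanSpace ℝ (Fin d)) (hx : ∀ i, L i ≤ x i ∧ x i < R i) :
    Metric.infDist x ({w : EuclideanSpace ℝ (Fin d) | ∀ i, L i ≤ w i ∧ w i < R i} ∩ E)
      ≤ ((d : ℝ) + 1) * S := by
  classical
  set sd := Real.sqrt d with hsd
  have hd1R : (1 : ℝ) ≤ (d : ℝ) := by exact_mod_cast hd1
  have hsd1 : 1 ≤ sd := by
    rw [hsd, show (1:ℝ) = Real.sqrt 1 from Real.sqrt_one.symm]
    exact Real.sqrt_le_sqrt hd1R
  have hsdsq : sd ^ 2 = (d : ℝ) := Real.sq_sqrt (by linarith)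
  have hsdd : sd ≤ (d : ℝ) := by nlinarith
  by_cases hbig : s ≤ 2 * S
  · obtain ⟨e, heE, he7⟩ := hnee
    have hcoord : ∀ i, dist (x i) (e i) ≤ s := by
      intro i
      rw [Real.dist_eq, abs_le]
      have h1 := hx i; have h2 := he7 i; have h3 := hRL i
      constructor <;> linarith [h1.1, h1.2, h2.1, h2.2]
    calc Metric.infDist x ({w : EuclideanSpace ℝ (Fin d) | ∀ i, L i ≤ w i ∧ w i < R i} ∩ E)
          ≤ dist x e := Metric.infDist_le_dist_of_mem ⟨he7, heE⟩
      _ ≤ sd * s := dist_le_sqrt_mul' _ _ s hs.le hcoord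
      _ ≤ sd * (2 * S) := mul_le_mul_of_nonneg_left hbig (by linarith)
      _ ≤ ((d : ℝ) + 1) * S := by nlinarith [sq_nonneg (sd - 1)]
  · push_neg at hbig
    refine le_of_forall_pos_le_add ?_
    intro η hη
    set ε := min (η / (2 * sd + 1)) ((s - 2 * S) / 8) with hεdef
    have hεpos : 0 < ε := lt_min (by positivity) (by linarith)
    have hε1 : ε ≤ η / (2 * sd + 1) := min_le_left _ _
    have hε2 : ε ≤ (s - 2 * S) / 8 := min_le_right _ _
    set M := S + 2 * ε with hMdef
    have hM0 : 0 < M := by rw [hMdef]; linarith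
    have h2M : 2 * M < s := by rw [hMdef]; linarith
    set z : EuclideanSpace ℝ (Fin d) :=
      WithLp.toLp 2 (fun i => max (if 0 < L i then L i + M else L i)
        (min (x i) (if R i ≤ 1 then R i - M else x i))) with hzdef
    have hzi : ∀ i, z i = max (if 0 < L i then L i + M else L i)
        (min (x i) (if R i ≤ 1 then R i - M else x i)) := by
      intro i; rw [hzdef]
    have hzL : ∀ i, L i ≤ z i := by
      intro i; rw [hzi i]
      have h1 : L i ≤ (if 0 < L i then L i + M else L i) := by split_ifs <;> linarith
      exact le_trans h1 (le_max_left _ _)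
    have hzR : ∀ i, z i < R i := by
      intro i; rw [hzi i]
      have hxi := hx i; have hRLi := hRL i
      apply max_lt
      · split_ifs <;> linarith
      · exact lt_of_le_of_lt (min_le_left _ _) hxi.2
    have hxz : ∀ i, dist (x i) (z i) ≤ M := by
      intro i; rw [hzi i, Real.dist_eq, abs_le]
      have hxi := hx i; have hRLi := hRL i
      constructor
      · have h1 : (if 0 < L i then L i + M else L i) ≤ x i + M := by
          split_ifs <;> linarith [hxi.1]
        have h2 : min (x i) (if R i ≤ 1 then R i - M else x i) ≤ x i + M :=
          le_trans (min_le_left _ _) (by linarith)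
        have := max_le h1 h2
        linarith
      · have h1 : x i - M ≤ min (x i) (if R i ≤ 1 then R i - M else x i) := by
          apply le_min (by linarith)
          split_ifs <;> linarith [hxi.2]
        have h2 : min (x i) (if R i ≤ 1 then R i - M else x i) ≤
            max (if 0 < L i then L i + M else L i)
              (min (x i) (if R i ≤ 1 then R i - M else x i)) := le_max_right _ _
        linarith
    have hzlo : ∀ i, 0 < L i → L i + M ≤ z i := by
      intro i hL; rw [hzi i, if_pos hL]; exact le_max_left _ _
    have hzhi : ∀ i, R i ≤ 1 → z i ≤ R i - M := by
      intro i hR1; rw [hzi i, if_pos hR1]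
      have hxi := hx i; have hRLi := hRL i
      apply max_le
      · split_ifs <;> linarith
      · exact min_le_right _ _
    have hzQ : z ∈ {w : EuclideanSpace ℝ (Fin d) | ∀ i, L i ≤ w i ∧ w i < R i} :=
      fun i => ⟨hzL i, hzR i⟩
    have hzB : z ∈ B := hQB hzQ
    obtain ⟨y, hyEB, hzy⟩ := (Metric.infDist_lt_iff hEB).1
      (lt_of_le_of_lt (hSle z hzB) (by linarith : S < S + ε))
    have hyE := hyEB.1
    have hyQ : ∀ i, L i ≤ y i ∧ y i < R i := by
      intro i
      have hy01 := hE y hyE i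
      have habs : |z i - y i| < S + ε :=
        lt_of_le_of_lt (by rw [← Real.dist_eq]; exact coord_dist_le' z y i) hzy
      have habs' := abs_lt.1 habs
      constructor
      · by_cases hL : 0 < L i
        · have := hzlo i hL
          rw [hMdef] at this
          linarith
        · push_neg at hL
          linarith [hy01.1]
      · by_cases hR1 : R i ≤ 1
        · have := hzhi i hR1
          rw [hMdef] at this
          linarith
        · push_neg at hR1
          linarith [hy01.2]
    have hεη : ε * (2 * sd + 1) ≤ η := (le_div_iff₀ (by linarith)).1 hε1
    calc Metric.infDist x ({w : EuclideanSpace ℝ (Fin d) | ∀ i, L i ≤ w i ∧ w i < R i} ∩ E)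
        ≤ dist x y := Metric.infDist_le_dist_of_mem ⟨hyQ, hyE⟩
      _ ≤ dist x z + dist z y := dist_triangle x z y
      _ ≤ sd * M + (S + ε) := add_le_add (dist_le_sqrt_mul' x z M hM0.le hxz) hzy.le
      _ ≤ ((d : ℝ) + 1) * S + η := by
          rw [hMdef]
          nlinarith [hsdd, hS0, hεη, hεpos, hsd1]

/-- If `Q ⊆ [0,1]^d` is a dyadic cube of side `2^{-k}`, `E ⊆ [0,1]^d` meets `7Q`, and
`B` is a closed ball of radius `7√d·2^{-k}` containing `7Q`, then
`sparse(E,7Q) ≤ √d·(d+1)·sparse(E,B)`. -/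
theorem sparse_cube_le_sparse_ball (d k : ℕ) (a : Fin d → ℕ) (ha : ∀ i, a i < 2 ^ k)
    (E : Set (EuclideanSpace ℝ (Fin d))) (hE : E ⊆ unitCube d)
    (hne : (E ∩ dyCube7 d k a).Nonempty)
    (c : EuclideanSpace ℝ (Fin d))
    (hQB : dyCube7 d k a ⊆ Metric.closedBall c (7 * Real.sqrt d * 2 ^ (-(k : ℤ)))) :
    sparse7 E k a ≤
      Real.sqrt d * ((d : ℝ) + 1) * sparseIn E c (7 * Real.sqrt d * 2 ^ (-(k : ℤ))) := by
  classical
  obtain ⟨e, heE, he7⟩ := hne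
  have h2pos : (0 : ℝ) < 2 ^ (-(k : ℤ)) := by positivity
  rcases Nat.eq_zero_or_pos d with hd0 | hd1
  · -- degenerate case d = 0
    subst hd0
    have hdist0 : ∀ p q : EuclideanSpace ℝ (Fin 0), dist p q = 0 := by
      intro p q; rw [EuclideanSpace.dist_eq]; simp
    have hnum : (⨆ x : (dyCube7 0 k a),
        Metric.infDist (x : EuclideanSpace ℝ (Fin 0)) (dyCube7 0 k a ∩ E)) ≤ 0 := by
      apply Real.iSup_le _ le_rfl
      intro x
      have h := Metric.infDist_le_dist_of_mem
        (x := (x : EuclideanSpace ℝ (Fin 0))) (s := dyCube7 0 k a ∩ E) ⟨he7, heE⟩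
      simpa [hdist0] using h
    have hL : sparse7 E k a ≤ 0 := by
      rw [sparse7]
      exact div_nonpos_of_nonpos_of_nonneg hnum (by positivity)
    have hR : Real.sqrt (0 : ℕ) * ((0 : ℕ) + 1 : ℝ) *
        sparseIn E c (7 * Real.sqrt (0 : ℕ) * 2 ^ (-(k : ℤ))) = 0 := by
      simp
    calc sparse7 E k a ≤ 0 := hL
      _ ≤ _ := by rw [hR]
  · -- main case d ≥ 1
    have hd1R : (1 : ℝ) ≤ (d : ℝ) := by exact_mod_cast hd1
    set sd := Real.sqrt d with hsd
    have hsd1 : 1 ≤ sd := by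
      rw [hsd, show (1:ℝ) = Real.sqrt 1 from Real.sqrt_one.symm]
      exact Real.sqrt_le_sqrt hd1R
    have hsdpos : 0 < sd := by linarith
    set r := 7 * sd * 2 ^ (-(k : ℤ)) with hrdef
    have hrpos : 0 < r := by rw [hrdef]; positivity
    have heB : e ∈ Metric.closedBall c r := hQB he7
    have hEB : (E ∩ Metric.closedBall c r).Nonempty := ⟨e, heE, heB⟩
    set S := ⨆ x : (Metric.closedBall c r),
      Metric.infDist (x : EuclideanSpace ℝ (Fin d)) (E ∩ Metric.closedBall c r) with hSdef
    have hbdd : BddAbove (Set.range fun x : (Metric.closedBall c r) =>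
        Metric.infDist (x : EuclideanSpace ℝ (Fin d)) (E ∩ Metric.closedBall c r)) := by
      refine ⟨2 * r, ?_⟩
      rintro _ ⟨w, rfl⟩
      calc Metric.infDist (w : EuclideanSpace ℝ (Fin d)) (E ∩ Metric.closedBall c r)
          ≤ dist (w : EuclideanSpace ℝ (Fin d)) e := Metric.infDist_le_dist_of_mem ⟨heE, heB⟩
        _ ≤ dist (w : EuclideanSpace ℝ (Fin d)) c + dist c e := dist_triangle _ _ _
        _ ≤ r + r := add_le_add (Metric.mem_closedBall.mp w.2)
            (by rw [dist_comm]; exact Metric.mem_closedBall.mp heB)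
        _ = 2 * r := by ring
    have hS0 : 0 ≤ S := by
      rw [hSdef]
      exact Real.iSup_nonneg fun _ => Metric.infDist_nonneg
    have hSle : ∀ z ∈ Metric.closedBall c r,
        Metric.infDist z (E ∩ Metric.closedBall c r) ≤ S := by
      intro z hz
      rw [hSdef]
      exact le_ciSup hbdd (⟨z, hz⟩ : Metric.closedBall c r)
    have main : ∀ x ∈ dyCube7 d k a,
        Metric.infDist x (dyCube7 d k a ∩ E) ≤ ((d : ℝ) + 1) * S := by
      intro x hx
      have := infDist_cube_aux hd1
        (fun i => ((a i : ℝ) - 3) * 2 ^ (-(k : ℤ)))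
        (fun i => ((a i : ℝ) + 4) * 2 ^ (-(k : ℤ)))
        (7 * 2 ^ (-(k : ℤ))) S (by positivity)
        (fun i => by ring) hS0 E (Metric.closedBall c r)
        (fun y hy i => (hE hy) i) hQB hEB hSle ⟨e, heE, he7⟩ x hx
      exact this
    have hsup : (⨆ x : (dyCube7 d k a),
        Metric.infDist (x : EuclideanSpace ℝ (Fin d)) (dyCube7 d k a ∩ E))
          ≤ ((d : ℝ) + 1) * S :=
      Real.iSup_le (fun w => main w w.2) (by positivity)
    have hspIn : sparseIn E c r = S / r := by rw [hSdef]; rfl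
    have h7pos : (0 : ℝ) < 7 * 2 ^ (-(k : ℤ)) := by positivity
    have heq : sd * ((d : ℝ) + 1) * (S / r) = (((d : ℝ) + 1) * S) / (7 * 2 ^ (-(k : ℤ))) := by
      rw [hrdef]
      field_simp
    calc sparse7 E k a
        = (⨆ x : (dyCube7 d k a),
            Metric.infDist (x : EuclideanSpace ℝ (Fin d)) (dyCube7 d k a ∩ E)) /
          (7 * 2 ^ (-(k : ℤ))) := rfl
      _ ≤ (((d : ℝ) + 1) * S) / (7 * 2 ^ (-(k : ℤ))) := by
          gcongr
      _ = sd * ((d : ℝ) + 1) * (S / r) := heq.symm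
      _ = sd * ((d : ℝ) + 1) * sparseIn E c r := by rw [hspIn]
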